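/- Let m ≡ 7 (mod 8) with m ≥ 7, n = 2^m − 1, and v = 2^{(m+1)/2} − 1. Then gcd(v, n) = 1, and for every integer a with 1 ≤ a ≤ 2^{(m−1)/2} + 2, the binary weight of (a·v mod n) is congruent to 0 or 1 modulo 4. -/

import Mathlib

def w2 (x : ℕ) : ℕ := (Nat.digits 2 x).sum

lemma w2_rec (n : ℕ) : w2 n = n % 2 + w2 (n / 2) := by
  rcases Nat.eq_zero_or_pos n with h | h
  · simp [h, w2]
  · rw [w2, Nat.digits_def' (by norm_num : 1 < 2) h, List.sum_cons]; rfl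

lemma w2_add_pow_mul : ∀ (k x y : ℕ), x < 2 ^ k → w2 (x + 2 ^ k * y) = w2 x + w2 y := by
  intro k
  induction k with
  | zero => intro x y hx; interval_cases x; simp [w2]
  | succ k ih =>
    intro x y hx
    have h2 : 2 ^ (k+1) * y = 2 * (2 ^ k * y) := by ring
    rw [w2_rec (x + 2 ^ (k+1) * y), w2_rec x]
    have e1 : (x + 2 ^ (k+1) * y) % 2 = x % 2 := by omega
    have e2 : (x + 2 ^ (k+1) * y) / 2 = x / 2 + 2 ^ k * y := by omega
    rw [e1, e2, ih (x/2) y (by omega)]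
    omega

lemma w2_compl : ∀ (k x : ℕ), x < 2 ^ k → w2 x + w2 (2 ^ k - 1 - x) = k := by
  intro k
  induction k with
  | zero => intro x hx; interval_cases x; simp [w2]
  | succ k ih =>
    intro x hx
    have hP : (0:ℕ) < 2 ^ k := Nat.pow_pos (by norm_num)
    have h2 : (2:ℕ) ^ (k+1) = 2 * 2 ^ k := by ring
    rw [w2_rec x, w2_rec (2 ^ (k+1) - 1 - x)]
    have e1 : (2 ^ (k+1) - 1 - x) % 2 = 1 - x % 2 := by omega
    have e2 : (2 ^ (k+1) - 1 - x) / 2 = 2 ^ k - 1 - x / 2 := by omega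
    have := ih (x/2) (by omega)
    rw [e1, e2]
    omega

lemma w2_mul_pred_pow (k a : ℕ) (h1 : 1 ≤ a) (h2 : a ≤ 2 ^ k) : w2 (a * (2 ^ k - 1)) = k := by
  have hP : (1:ℕ) ≤ 2 ^ k := Nat.one_le_two_pow
  have key : a * (2 ^ k - 1) = (2 ^ k - a) + 2 ^ k * (a - 1) := by
    zify [hP, h1, h2]; ring
  rw [key, w2_add_pow_mul k _ _ (by omega)]
  rw [show 2 ^ k - a = 2 ^ k - 1 - (a - 1) by omega]
  have := w2_compl k (a-1) (by omega)
  omega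

lemma w2_two_pow (k : ℕ) : w2 (2 ^ k) = 1 := by
  have := w2_add_pow_mul k 0 1 (Nat.pow_pos (by norm_num))
  simpa [w2] using this

lemma w2_pred_pow (k : ℕ) : w2 (2 ^ k - 1) = k := by
  have := w2_compl k 0 (Nat.pow_pos (by norm_num))
  simpa [w2] using this
theorem stmt18 (m : ℕ) (hm : m % 8 = 7) (hm7 : 7 ≤ m)
    (n v : ℕ) (hn : n = 2 ^ m - 1) (hv : v = 2 ^ ((m + 1) / 2) - 1) :
    Nat.gcd v n = 1 ∧
    ∀ a : ℕ, 1 ≤ a → a ≤ 2 ^ ((m - 1) / 2) + 2 →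
      w2 (a * v % n) % 4 = 0 ∨ w2 (a * v % n) % 4 = 1 := by
  set k := (m + 1) / 2 with hk
  have hm2 : m = 2 * k - 1 := by omega
  have hk4 : k % 4 = 0 := by omega
  have hk4' : 4 ≤ k := by omega
  set A := 2 ^ (k - 1) with hA
  have hA8 : 8 ≤ A := by
    calc (8:ℕ) = 2 ^ 3 := by norm_num
    _ ≤ 2 ^ (k-1) := Nat.pow_le_pow_right (by norm_num) (by omega)
  have hAB : 8 * A ≤ A * A := Nat.mul_le_mul_right A hA8
  have h2k : 2 ^ k = 2 * A := by
    rw [hA, ← pow_succ']; congr 1; omega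
  have h2m : 2 ^ m = 2 * (A * A) := by
    rw [show m = (k-1) + ((k-1) + 1) by omega, pow_add, pow_succ, hA]; ring
  have hv' : v = 2 * A - 1 := by rw [hv, h2k]
  have hn' : n = 2 * (A * A) - 1 := by rw [hn, h2m]
  have hmk : (m - 1) / 2 = k - 1 := by omega
  constructor
  · -- gcd part
    have hvA : v * A = 2 * (A * A) - A := by
      rw [hv', Nat.sub_mul]; ring_nf
    have hnv : n % v = A - 1 := by
      have : n = (A - 1) + v * A := by omega
      rw [this, Nat.add_mul_mod_self_left, Nat.mod_eq_of_lt (by omega)]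
    have hvm : v % (A - 1) = 1 := by
      have : v = 1 + (A - 1) * 2 := by omega
      rw [this, Nat.add_mul_mod_self_left, Nat.mod_eq_of_lt (by omega)]
    rw [Nat.gcd_rec v n, hnv, Nat.gcd_rec (A-1) v, hvm, Nat.gcd_rec 1 (A-1)]
    simp
  · intro a ha1 ha2
    rw [hmk, ← hA] at ha2
    rcases Nat.lt_or_ge a (A + 1) with hc | hc
    · -- a ≤ A
      have hav : a * v ≤ A * v := Nat.mul_le_mul_right v (by omega)
      have hAv : A * v = 2 * (A * A) - A := by
        rw [hv', Nat.mul_sub]; ring_nf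
      have hlt : a * v < n := by omega
      rw [Nat.mod_eq_of_lt hlt]
      left
      rw [hv', ← h2k, w2_mul_pred_pow k a ha1 (by omega)]
      omega
    · rcases Nat.lt_or_ge a (A + 2) with hc2 | hc2
      · -- a = A + 1
        have haeq : a = A + 1 := by omega
        have hid : a * v = n + A := by
          rw [haeq, hv', hn']
          zify [show (1:ℕ) ≤ 2 * A by omega, show (1:ℕ) ≤ 2 * (A*A) by omega]
          ring
        rw [hid, Nat.add_mod_left, Nat.mod_eq_of_lt (show A < n by omega)]
        right
        rw [hA, w2_two_pow]
      · -- a = A + 2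
        have haeq : a = A + 2 := by omega
        have hid : a * v = n + (3 * A - 1) := by
          rw [haeq, hv', hn']
          zify [show (1:ℕ) ≤ 2 * A by omega, show (1:ℕ) ≤ 2 * (A*A) by omega,
            show (1:ℕ) ≤ 3 * A by omega]
          ring
        rw [hid, Nat.add_mod_left, Nat.mod_eq_of_lt (show 3 * A - 1 < n by omega)]
        left
        have h3A : 3 * A - 1 = (A - 1) + 2 ^ (k-1) * 2 := by rw [← hA]; omega
        rw [h3A, w2_add_pow_mul (k-1) _ _ (by rw [← hA]; omega)]
        have := w2_pred_pow (k-1)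
        rw [← hA] at this
        have h2 : w2 2 = 1 := by
          have := w2_two_pow 1; norm_num at this; exact this
        omega
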